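/- arXiv:math/0409577 — 2 statements merged into one kernel-verified Lean document; each statement's English description precedes it below -/
import Mathlib

section
/- For f_II(ξ,t) = (ξ + t, t²ξ), the critical value set (the image of the critical set under f_II) is exactly the union of the x-axis {(x,0) : x ∈ ℝ} and the curve {(x, 4x³/27) : x ∈ ℝ}. Moreover the function h(x) = 4x³/27 describing the second branch satisfies h(0) = h'(0) = h''(0) = 0 and h'''(0) ≠ 0, so the two envelope branches have a self-tangency of order exactly 2 at the origin. -/
/-- The type II normal form `f_II(ξ,t) = (ξ + t, t²ξ)`. -/
def fII : ℝ × ℝ → ℝ × ℝ := fun p => (p.1 + p.2, p.2 ^ 2 * p.1)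

/-- The explicit derivative of `fII` at `p`. -/
noncomputable def fIID (p : ℝ × ℝ) : ℝ × ℝ →L[ℝ] ℝ × ℝ :=
  ((ContinuousLinearMap.fst ℝ ℝ ℝ) + (ContinuousLinearMap.snd ℝ ℝ ℝ)).prod
    ((p.2 ^ 2) • (ContinuousLinearMap.fst ℝ ℝ ℝ) +
     (2 * p.2 * p.1) • (ContinuousLinearMap.snd ℝ ℝ ℝ))

lemma fIID_apply (p v : ℝ × ℝ) :
    fIID p v = (v.1 + v.2, p.2 ^ 2 * v.1 + 2 * p.2 * p.1 * v.2) := by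
  simp [fIID]

lemma hasFDerivAt_fII (p : ℝ × ℝ) : HasFDerivAt fII (fIID p) p := by
  have h1 : HasFDerivAt (fun q : ℝ × ℝ => q.1 + q.2)
      ((ContinuousLinearMap.fst ℝ ℝ ℝ) + (ContinuousLinearMap.snd ℝ ℝ ℝ)) p :=
    hasFDerivAt_fst.add hasFDerivAt_snd
  have h2 := (hasFDerivAt_snd.mul hasFDerivAt_snd).mul (hasFDerivAt_fst (𝕜 := ℝ) (p := p))
  have h3 : HasFDerivAt (fun q : ℝ × ℝ => q.2 ^ 2 * q.1)
      ((p.2 ^ 2) • (ContinuousLinearMap.fst ℝ ℝ ℝ) +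
       (2 * p.2 * p.1) • (ContinuousLinearMap.snd ℝ ℝ ℝ)) p := by
    have hfun : (fun q : ℝ × ℝ => q.2 ^ 2 * q.1) = fun q : ℝ × ℝ => (q.2 * q.2) * q.1 := by
      funext q; ring
    rw [hfun]
    refine h2.congr_fderiv ?_
    ext <;> simp <;> ring
  exact h1.prodMk h3

lemma fderiv_fII (p : ℝ × ℝ) : fderiv ℝ fII p = fIID p := (hasFDerivAt_fII p).fderiv

lemma crit_set :
    {p : ℝ × ℝ | ¬ Function.Surjective ⇑(fderiv ℝ fII p)} =
      {p : ℝ × ℝ | p.2 = 0 ∨ p.2 = 2 * p.1} := by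
  ext p
  simp only [Set.mem_setOf_eq, fderiv_fII]
  constructor
  · intro h
    by_contra hc
    push_neg at hc
    obtain ⟨h0, h2⟩ := hc
    apply h
    intro q
    have hd : 2 * p.2 * p.1 - p.2 ^ 2 ≠ 0 := by
      intro hd
      apply h2
      have : p.2 * (p.2 - 2 * p.1) = 0 := by ring_nf; linarith [hd]
      rcases mul_eq_zero.1 this with h | h
      · exact absurd h h0
      · linarith
    refine ⟨(q.1 - (q.2 - p.2 ^ 2 * q.1) / (2 * p.2 * p.1 - p.2 ^ 2),
            (q.2 - p.2 ^ 2 * q.1) / (2 * p.2 * p.1 - p.2 ^ 2)), ?_⟩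
    rw [fIID_apply]
    refine Prod.ext ?_ ?_
    · simp
    · simp only
      field_simp
      ring
  · rintro (h | h) hs
    · obtain ⟨v, hv⟩ := hs (0, 1)
      rw [fIID_apply] at hv
      have h2 := congrArg Prod.snd hv
      simp only at h2
      rw [h] at h2
      norm_num at h2
    · obtain ⟨v, hv⟩ := hs (0, 1)
      rw [fIID_apply] at hv
      have h1 := congrArg Prod.fst hv
      have h2 := congrArg Prod.snd hv
      simp only at h1 h2
      rw [h] at h2
      nlinarith [h1, h2]

/-- The critical value set of `f_II` is the union of the x-axis and the
curve `y = 4x³/27`; furthermore `h(x) = 4x³/27` has vanishing value, first and second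
derivatives at `0` and nonzero third derivative, so the two envelope branches have a
self-tangency of order exactly 2 at the origin. -/
theorem fII_envelope_self_tangency :
    (fII '' {p : ℝ × ℝ | ¬ Function.Surjective ⇑(fderiv ℝ fII p)} =
      {q : ℝ × ℝ | q.2 = 0} ∪ {q : ℝ × ℝ | q.2 = 4 * q.1 ^ 3 / 27}) ∧
    (fun x : ℝ => 4 * x ^ 3 / 27) 0 = 0 ∧
    deriv (fun x : ℝ => 4 * x ^ 3 / 27) 0 = 0 ∧
    deriv (deriv (fun x : ℝ => 4 * x ^ 3 / 27)) 0 = 0 ∧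
    deriv (deriv (deriv (fun x : ℝ => 4 * x ^ 3 / 27))) 0 ≠ 0 := by
  have hd1 : deriv (fun x : ℝ => 4 * x ^ 3 / 27) = fun x => 4 * x ^ 2 / 9 := by
    funext x
    have h : HasDerivAt (fun x : ℝ => 4 * x ^ 3 / 27) (4 * x ^ 2 / 9) x := by
      have := ((hasDerivAt_pow 3 x).const_mul (4 : ℝ)).div_const 27
      refine this.congr_deriv ?_
      push_cast; ring
    exact h.deriv
  have hd2 : deriv (fun x : ℝ => 4 * x ^ 2 / 9) = fun x => 8 * x / 9 := by
    funext x
    have h : HasDerivAt (fun x : ℝ => 4 * x ^ 2 / 9) (8 * x / 9) x := by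
      have := ((hasDerivAt_pow 2 x).const_mul (4 : ℝ)).div_const 9
      refine this.congr_deriv ?_
      push_cast; ring
    exact h.deriv
  have hd3 : deriv (fun x : ℝ => 8 * x / 9) = fun _ => (8 : ℝ) / 9 := by
    funext x
    have h : HasDerivAt (fun x : ℝ => 8 * x / 9) (8 / 9) x := by
      have := ((hasDerivAt_id x).const_mul (8 : ℝ)).div_const 9
      refine this.congr_deriv ?_
      ring
    exact h.deriv
  refine ⟨?_, by norm_num, by rw [hd1]; norm_num, by rw [hd1, hd2]; norm_num, by rw [hd1, hd2, hd3]; norm_num⟩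
  rw [crit_set]
  ext q
  constructor
  · rintro ⟨p, hp, rfl⟩
    simp only [Set.mem_setOf_eq] at hp
    rcases hp with h | h
    · left
      simp [fII, h]
    · right
      simp only [fII, Set.mem_setOf_eq]
      rw [h]
      ring
  · obtain ⟨x, y⟩ := q
    rintro (h | h) <;> simp only [Set.mem_setOf_eq] at h
    · refine ⟨(x, 0), Or.inl rfl, ?_⟩
      simp [fII, h]
    · refine ⟨(x / 3, 2 * x / 3), Or.inr (by ring), ?_⟩
      simp only [fII, Prod.mk.injEq]
      constructor
      · ring
      · rw [h]; ring
end

section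
/- Let a ∈ ℝ with a < 1/3 and a ≠ 0, let c± = (−1 ± √(1 − 3a))/3 and m± = c±³ + c±² + a·c±, and let p_a(ξ,t) = (ξ, t³ + t²ξ + atξ²). Then the critical value set of p_a is exactly {(x, m₊·x³) : x ∈ ℝ} ∪ {(x, m₋·x³) : x ∈ ℝ}. In particular both envelope branches are graphs of cubic functions whose 2-jets at the origin vanish, so the two branches are tangent to the x-axis at the origin with tangency of order at least 2. -/
/-- The projected normal form `p_a(ξ,t) = (ξ, t³ + t²ξ + atξ²)`. -/
def projForm (a : ℝ) : ℝ × ℝ → ℝ × ℝ :=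
  fun p => (p.1, p.2 ^ 3 + p.2 ^ 2 * p.1 + a * p.2 * p.1 ^ 2)

/-- The slope `c₊ = (−1 + √(1−3a))/3` of the first criminant line. -/
noncomputable def cPlus (a : ℝ) : ℝ := (-1 + Real.sqrt (1 - 3 * a)) / 3

/-- The slope `c₋ = (−1 − √(1−3a))/3` of the second criminant line. -/
noncomputable def cMinus (a : ℝ) : ℝ := (-1 - Real.sqrt (1 - 3 * a)) / 3

/-- The cubic coefficient `m± = c±³ + c±² + a·c±` of an envelope branch. -/
noncomputable def mPlus (a : ℝ) : ℝ := cPlus a ^ 3 + cPlus a ^ 2 + a * cPlus a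

noncomputable def mMinus (a : ℝ) : ℝ := cMinus a ^ 3 + cMinus a ^ 2 + a * cMinus a

lemma surj_iff (M : ℝ × ℝ →L[ℝ] ℝ × ℝ) (A B : ℝ)
    (h : ∀ v : ℝ × ℝ, M v = (v.1, A * v.1 + B * v.2)) :
    Function.Surjective ⇑M ↔ B ≠ 0 := by
  constructor
  · intro hs hB
    obtain ⟨v, hv⟩ := hs (0, 1)
    rw [h v] at hv
    have h1 : v.1 = 0 := congrArg Prod.fst hv
    have h2 : A * v.1 + B * v.2 = 1 := congrArg Prod.snd hv
    rw [h1, hB] at h2; simp at h2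
  · intro hB q
    refine ⟨(q.1, (q.2 - A * q.1) / B), ?_⟩
    rw [h]
    ext
    · simp
    · simp; field_simp; ring

lemma projForm_hasFDerivAt (a : ℝ) (p : ℝ × ℝ) :
    HasFDerivAt (projForm a)
      ((ContinuousLinearMap.fst ℝ ℝ ℝ).prod
        ((p.2 ^ 2 + 2 * a * p.2 * p.1) • ContinuousLinearMap.fst ℝ ℝ ℝ +
         (3 * p.2 ^ 2 + 2 * p.2 * p.1 + a * p.1 ^ 2) • ContinuousLinearMap.snd ℝ ℝ ℝ)) p := by
  have h1 : HasFDerivAt (fun q : ℝ × ℝ => q.1) (ContinuousLinearMap.fst ℝ ℝ ℝ) p := hasFDerivAt_fst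
  have h2 : HasFDerivAt (fun q : ℝ × ℝ => q.2) (ContinuousLinearMap.snd ℝ ℝ ℝ) p := hasFDerivAt_snd
  have hg := (((h2.mul h2).mul h2).add ((h2.mul h2).mul h1)).add
      (((h2.mul h1).mul h1).const_mul a)
  have heq : projForm a = fun q : ℝ × ℝ =>
      (q.1, (q.2 * q.2 * q.2 + q.2 * q.2 * q.1) + a * (q.2 * q.1 * q.1)) := by
    funext q; simp [projForm]; ring
  rw [heq]
  refine (HasFDerivAt.prodMk h1 ?_)
  convert hg using 1
  · rfl
  apply ContinuousLinearMap.ext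
  intro v
  simp [ContinuousLinearMap.smul_apply]
  ring

/-- For `a < 1/3`, `a ≠ 0`, the critical value set of `p_a` is exactly
the union of the two cubic graphs `y = m₊x³` and `y = m₋x³`; each branch is the graph
of a cubic whose 2-jet at the origin vanishes, so the two branches are tangent to the
x-axis at the origin with tangency of order at least 2. -/
theorem projForm_envelope (a : ℝ) (ha1 : a < 1 / 3) (ha0 : a ≠ 0) :
    (projForm a '' {p : ℝ × ℝ | ¬ Function.Surjective ⇑(fderiv ℝ (projForm a) p)} =
      {q : ℝ × ℝ | ∃ x : ℝ, q = (x, mPlus a * x ^ 3)} ∪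
      {q : ℝ × ℝ | ∃ x : ℝ, q = (x, mMinus a * x ^ 3)}) ∧
    (∀ m ∈ ({mPlus a, mMinus a} : Set ℝ),
      (fun x : ℝ => m * x ^ 3) 0 = 0 ∧
      deriv (fun x : ℝ => m * x ^ 3) 0 = 0 ∧
      deriv (deriv (fun x : ℝ => m * x ^ 3)) 0 = 0) := by
  have hs2 : Real.sqrt (1 - 3 * a) ^ 2 = 1 - 3 * a := by
    rw [Real.sq_sqrt]; linarith
  -- factorization of the partial derivative
  have hfac : ∀ p : ℝ × ℝ,
      3 * p.2 ^ 2 + 2 * p.2 * p.1 + a * p.1 ^ 2 =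
        3 * (p.2 - cPlus a * p.1) * (p.2 - cMinus a * p.1) := by
    intro p
    unfold cPlus cMinus
    linear_combination (p.1 ^ 2 / 3) * hs2
  -- criticality criterion
  have key : ∀ p : ℝ × ℝ,
      ¬ Function.Surjective ⇑(fderiv ℝ (projForm a) p) ↔
        (p.2 = cPlus a * p.1 ∨ p.2 = cMinus a * p.1) := by
    intro p
    rw [(projForm_hasFDerivAt a p).fderiv]
    rw [surj_iff _ (p.2 ^ 2 + 2 * a * p.2 * p.1) (3 * p.2 ^ 2 + 2 * p.2 * p.1 + a * p.1 ^ 2)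
      (fun v => by simp [ContinuousLinearMap.prod_apply])]
    rw [not_ne_iff, hfac p]
    constructor
    · intro h
      rcases mul_eq_zero.mp h with h | h
      · rcases mul_eq_zero.mp h with h | h
        · norm_num at h
        · exact Or.inl (by linarith [sub_eq_zero.mp h])
      · exact Or.inr (sub_eq_zero.mp h)
    · rintro (h | h) <;> rw [h] <;> ring
  constructor
  · ext q
    simp only [Set.mem_image, Set.mem_setOf_eq, Set.mem_union]
    constructor
    · rintro ⟨p, hp, rfl⟩
      rcases (key p).mp hp with h | h
      · left
        refine ⟨p.1, ?_⟩
        simp only [projForm, h]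
        unfold mPlus
        exact Prod.ext rfl (by ring)
      · right
        refine ⟨p.1, ?_⟩
        simp only [projForm, h]
        unfold mMinus
        exact Prod.ext rfl (by ring)
    · rintro (⟨x, rfl⟩ | ⟨x, rfl⟩)
      · refine ⟨(x, cPlus a * x), (key _).mpr (Or.inl rfl), ?_⟩
        simp only [projForm]
        unfold mPlus
        exact Prod.ext rfl (by ring)
      · refine ⟨(x, cMinus a * x), (key _).mpr (Or.inr rfl), ?_⟩
        simp only [projForm]
        unfold mMinus
        exact Prod.ext rfl (by ring)
  · intro m _
    have hd : deriv (fun x : ℝ => m * x ^ 3) = fun x : ℝ => m * (3 * x ^ 2) := by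
      funext x
      rw [deriv_const_mul _ (by fun_prop)]
      simp
    refine ⟨by simp, ?_, ?_⟩
    · rw [hd]; simp
    · rw [hd]
      have hd2 : deriv (fun x : ℝ => m * (3 * x ^ 2)) 0 = 0 := by
        rw [deriv_const_mul _ (by fun_prop)]
        simp
      exact hd2
end
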